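/- Let σ ∈ M_n(ℂ) be positive definite with trace 1, and suppose the Dirichlet form E of a KMS-symmetric generator satisfies the Poincaré inequality λ·Var_σ(X) ≤ E(X) for all X, where Var_σ(X) = ‖X - Tr(σX)·I‖_{L²(σ)}². Then for every density matrix ρ, ‖ρ - σ‖₁² ≤ (4/λ)·E(σ^{-1/4}√ρ σ^{-1/4}). -/

import Mathlib

open Matrix
open scoped ComplexOrder

/-- Real powers of a Hermitian matrix, via its spectral decomposition. -/
noncomputable def mpow {n : ℕ} {σ : Matrix (Fin n) (Fin n) ℂ} (hσ : σ.IsHermitian)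
    (t : ℝ) : Matrix (Fin n) (Fin n) ℂ :=
  (hσ.eigenvectorUnitary : Matrix (Fin n) (Fin n) ℂ) *
    Matrix.diagonal (fun i => ((hσ.eigenvalues i ^ t : ℝ) : ℂ)) *
    (star hσ.eigenvectorUnitary : Matrix (Fin n) (Fin n) ℂ)

/-- The matrix square root of a positive semidefinite matrix (as in older Mathlib). -/
noncomputable def Matrix.PosSemidef.sqrt {m : Type*} [Fintype m] [DecidableEq m] {𝕜 : Type*} [RCLike 𝕜]
    {A : Matrix m m 𝕜} (hA : A.PosSemidef) : Matrix m m 𝕜 :=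
  hA.1.eigenvectorUnitary.1 * diagonal ((↑) ∘ (Real.sqrt ·) ∘ hA.1.eigenvalues) *
    (star hA.1.eigenvectorUnitary : Matrix m m 𝕜)

variable {n : ℕ} {σ : Matrix (Fin n) (Fin n) ℂ}

lemma mpow_isHermitian (hσ : σ.IsHermitian) (t : ℝ) : (mpow hσ t).IsHermitian := by
  unfold mpow Matrix.IsHermitian
  simp only [conjTranspose_mul, diagonal_conjTranspose, Matrix.mul_assoc]
  have h1 : ((star hσ.eigenvectorUnitary : Matrix (Fin n) (Fin n) ℂ))ᴴ =
      (hσ.eigenvectorUnitary : Matrix (Fin n) (Fin n) ℂ) := by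
    simp [Matrix.star_eq_conjTranspose]
  have h2 : ((hσ.eigenvectorUnitary : Matrix (Fin n) (Fin n) ℂ))ᴴ =
      (star hσ.eigenvectorUnitary : Matrix (Fin n) (Fin n) ℂ) := rfl
  rw [h1, h2]
  congr 2
  funext i
  funext j
  rcases eq_or_ne i j with h | h
  · subst h
    simp [Matrix.diagonal_apply_eq]
  · simp [Matrix.diagonal_apply_ne _ h]

lemma mpow_mul_mpow (hσ : σ.PosDef) (s t : ℝ) :
    mpow hσ.1 s * mpow hσ.1 t = mpow hσ.1 (s + t) := by
  unfold mpow
  have hU : (star hσ.1.eigenvectorUnitary : Matrix (Fin n) (Fin n) ℂ) *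
      (hσ.1.eigenvectorUnitary : Matrix (Fin n) (Fin n) ℂ) = 1 :=
    Matrix.mem_unitaryGroup_iff'.mp hσ.1.eigenvectorUnitary.2
  calc _ = (hσ.1.eigenvectorUnitary : Matrix (Fin n) (Fin n) ℂ) *
        (Matrix.diagonal (fun i => ((hσ.1.eigenvalues i ^ s : ℝ) : ℂ)) *
        ((star hσ.1.eigenvectorUnitary : Matrix (Fin n) (Fin n) ℂ) *
          (hσ.1.eigenvectorUnitary : Matrix (Fin n) (Fin n) ℂ)) *
        Matrix.diagonal (fun i => ((hσ.1.eigenvalues i ^ t : ℝ) : ℂ))) *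
        (star hσ.1.eigenvectorUnitary : Matrix (Fin n) (Fin n) ℂ) := by
        simp only [Matrix.mul_assoc]
    _ = _ := by
        rw [hU, Matrix.mul_one, Matrix.diagonal_mul_diagonal]
        congr 2
        ext i j
        rcases eq_or_ne i j with h | h
        · subst h
          simp only [Matrix.diagonal_apply_eq]
          rw [← Complex.ofReal_mul, ← Real.rpow_add (hσ.eigenvalues_pos i)]
        · simp [Matrix.diagonal_apply_ne _ h]

lemma mpow_zero (hσ : σ.IsHermitian) : mpow hσ 0 = 1 := by
  unfold mpow
  simp only [Real.rpow_zero, Complex.ofReal_one, Matrix.diagonal_one, Matrix.mul_one]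
  exact Matrix.mem_unitaryGroup_iff.mp hσ.eigenvectorUnitary.2

lemma mpow_one (hσ : σ.IsHermitian) : mpow hσ 1 = σ := by
  unfold mpow
  simp only [Real.rpow_one]
  exact (hσ.spectral_theorem).symm

lemma trace_re_nonneg {A : Matrix (Fin n) (Fin n) ℂ} (hA : A.PosSemidef) :
    0 ≤ A.trace.re := by
  have h : ∀ i, 0 ≤ (A i i).re := by
    intro i
    have := hA.diag_nonneg (i := i)
    exact (Complex.le_def.mp this).1
  have : A.trace.re = ∑ i, (A i i).re := by
    simp [Matrix.trace, Matrix.diag, Complex.re_sum]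
  rw [this]
  exact Finset.sum_nonneg fun i _ => h i

lemma trace_cs (X Y : Matrix (Fin n) (Fin n) ℂ) :
    ‖(Xᴴ * Y).trace‖ ^ 2 ≤ (Xᴴ * X).trace.re * (Yᴴ * Y).trace.re := by
  let f : EuclideanSpace ℂ (Fin n × Fin n) := WithLp.toLp 2 (fun p : Fin n × Fin n => X p.2 p.1)
  let g : EuclideanSpace ℂ (Fin n × Fin n) := WithLp.toLp 2 (fun p : Fin n × Fin n => Y p.2 p.1)
  have key : ∀ Z W : Matrix (Fin n) (Fin n) ℂ,
      (Zᴴ * W).trace = ∑ p : Fin n × Fin n, (starRingEnd ℂ) (Z p.2 p.1) * W p.2 p.1 := by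
    intro Z W
    rw [Matrix.trace, Fintype.sum_prod_type]
    simp [Matrix.diag, Matrix.mul_apply, Matrix.conjTranspose_apply, mul_comm]
  have h1 : (Xᴴ * Y).trace = inner (𝕜 := ℂ) f g := by
    rw [key, PiLp.inner_apply]
    exact Finset.sum_congr rfl fun p _ => by
      simp only [f, g, WithLp.ofLp_toLp, RCLike.inner_apply]; ring
  have h2 : (Xᴴ * X).trace = inner (𝕜 := ℂ) f f := by
    rw [key, PiLp.inner_apply]
    exact Finset.sum_congr rfl fun p _ => by
      simp only [f, g, WithLp.ofLp_toLp, RCLike.inner_apply]; ring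
  have h3 : (Yᴴ * Y).trace = inner (𝕜 := ℂ) g g := by
    rw [key, PiLp.inner_apply]
    exact Finset.sum_congr rfl fun p _ => by
      simp only [f, g, WithLp.ofLp_toLp, RCLike.inner_apply]; ring
  rw [h1, h2, h3, inner_self_eq_norm_sq_to_K, inner_self_eq_norm_sq_to_K]
  calc ‖(inner (𝕜 := ℂ) f g : ℂ)‖ ^ 2 ≤ (‖f‖ * ‖g‖) ^ 2 :=
        pow_le_pow_left₀ (norm_nonneg _) (norm_inner_le_norm (𝕜 := ℂ) f g) 2
    _ = ((‖f‖ : ℂ) ^ 2).re * ((‖g‖ : ℂ) ^ 2).re := by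
        rw [← Complex.ofReal_pow, ← Complex.ofReal_pow, Complex.ofReal_re,
          Complex.ofReal_re, mul_pow]

/-- The trace (Schatten-1) norm `‖A‖₁ = Tr √(A* A)`. -/
noncomputable def traceNorm {n : ℕ} (A : Matrix (Fin n) (Fin n) ℂ) : ℝ :=
  ((Matrix.posSemidef_conjTranspose_mul_self A).sqrt.trace).re

/-- The squared weighted `L²(σ)` (KMS) norm `‖X‖²_{L²(σ)} = Tr(σ^{1/2} X* σ^{1/2} X)`. -/
noncomputable def l2SigmaNormSq {n : ℕ} {σ : Matrix (Fin n) (Fin n) ℂ} (hσ : σ.PosDef)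
    (X : Matrix (Fin n) (Fin n) ℂ) : ℝ :=
  (mpow hσ.1 (1/2 : ℝ) * Xᴴ * mpow hσ.1 (1/2 : ℝ) * X).trace.re

/-- The variance `Var_σ(X) = ‖X - Tr(σ X) I‖²_{L²(σ)}`. -/
noncomputable def varSigma {n : ℕ} {σ : Matrix (Fin n) (Fin n) ℂ} (hσ : σ.PosDef)
    (X : Matrix (Fin n) (Fin n) ℂ) : ℝ :=
  l2SigmaNormSq hσ (X - (σ * X).trace • (1 : Matrix (Fin n) (Fin n) ℂ))


/-- conjugation of a real diagonal by the eigenvector unitary of `hM` -/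
noncomputable def cdiag {n : ℕ} {M : Matrix (Fin n) (Fin n) ℂ} (hM : M.IsHermitian)
    (e : Fin n → ℝ) : Matrix (Fin n) (Fin n) ℂ :=
  (hM.eigenvectorUnitary : Matrix (Fin n) (Fin n) ℂ) *
    Matrix.diagonal (fun i => ((e i : ℝ) : ℂ)) *
    (star hM.eigenvectorUnitary : Matrix (Fin n) (Fin n) ℂ)

variable {M : Matrix (Fin n) (Fin n) ℂ}

lemma cdiag_mul (hM : M.IsHermitian) (e f : Fin n → ℝ) :
    cdiag hM e * cdiag hM f = cdiag hM (fun i => e i * f i) := by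
  unfold cdiag
  have hU : (star hM.eigenvectorUnitary : Matrix (Fin n) (Fin n) ℂ) *
      (hM.eigenvectorUnitary : Matrix (Fin n) (Fin n) ℂ) = 1 :=
    Matrix.mem_unitaryGroup_iff'.mp hM.eigenvectorUnitary.2
  calc _ = (hM.eigenvectorUnitary : Matrix (Fin n) (Fin n) ℂ) *
        (Matrix.diagonal (fun i => ((e i : ℝ) : ℂ)) *
        ((star hM.eigenvectorUnitary : Matrix (Fin n) (Fin n) ℂ) *
          (hM.eigenvectorUnitary : Matrix (Fin n) (Fin n) ℂ)) *
        Matrix.diagonal (fun i => ((f i : ℝ) : ℂ))) *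
        (star hM.eigenvectorUnitary : Matrix (Fin n) (Fin n) ℂ) := by
        simp only [Matrix.mul_assoc]
    _ = _ := by
        rw [hU, Matrix.mul_one, Matrix.diagonal_mul_diagonal]
        congr 2
        funext i
        push_cast
        ring

lemma cdiag_herm (hM : M.IsHermitian) (e : Fin n → ℝ) : (cdiag hM e)ᴴ = cdiag hM e := by
  unfold cdiag
  simp only [conjTranspose_mul, diagonal_conjTranspose, Matrix.mul_assoc]
  have h1 : ((star hM.eigenvectorUnitary : Matrix (Fin n) (Fin n) ℂ))ᴴ =
      (hM.eigenvectorUnitary : Matrix (Fin n) (Fin n) ℂ) := by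
    simp [Matrix.star_eq_conjTranspose]
  have h2 : ((hM.eigenvectorUnitary : Matrix (Fin n) (Fin n) ℂ))ᴴ =
      (star hM.eigenvectorUnitary : Matrix (Fin n) (Fin n) ℂ) := rfl
  rw [h1, h2]
  congr 2
  funext i
  funext j
  rcases eq_or_ne i j with h | h
  · subst h
    simp [Matrix.diagonal_apply_eq]
  · simp [Matrix.diagonal_apply_ne _ h]

lemma cdiag_one (hM : M.IsHermitian) : cdiag hM (fun _ => (1 : ℝ)) = 1 := by
  unfold cdiag
  simp only [Complex.ofReal_one, Matrix.diagonal_one, Matrix.mul_one]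
  exact Matrix.mem_unitaryGroup_iff.mp hM.eigenvectorUnitary.2

lemma cdiag_trace (hM : M.IsHermitian) (e : Fin n → ℝ) :
    (cdiag hM e).trace = ((∑ i, e i : ℝ) : ℂ) := by
  unfold cdiag
  rw [Matrix.trace_mul_comm, ← Matrix.mul_assoc,
    Matrix.mem_unitaryGroup_iff'.mp hM.eigenvectorUnitary.2, Matrix.one_mul,
    Matrix.trace_diagonal]
  push_cast
  rfl

lemma cdiag_posSemidef (hM : M.IsHermitian) {e : Fin n → ℝ} (he : ∀ i, 0 ≤ e i) :
    (cdiag hM e).PosSemidef := by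
  unfold cdiag
  have hd : (Matrix.diagonal (fun i => ((e i : ℝ) : ℂ))).PosSemidef := by
    refine Matrix.posSemidef_diagonal_iff.mpr fun i => ?_
    exact_mod_cast Complex.zero_le_real.mpr (he i)
  have := hd.mul_mul_conjTranspose_same (hM.eigenvectorUnitary : Matrix (Fin n) (Fin n) ℂ)
  simpa [Matrix.star_eq_conjTranspose, Matrix.mul_assoc] using this

lemma cdiag_spectral (hM : M.IsHermitian) : M = cdiag hM hM.eigenvalues := by
  conv_lhs => rw [hM.spectral_theorem]
  rfl

section
open scoped MatrixOrder Matrix.Norms.L2Operator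

lemma psd_sq_unique {A B : Matrix (Fin n) (Fin n) ℂ} (hA : A.PosSemidef) (hB : B.PosSemidef)
    (h : A ^ 2 = B ^ 2) : A = B :=
  (CFC.sq_eq_sq_iff A B (Matrix.nonneg_iff_posSemidef.mpr hA)
    (Matrix.nonneg_iff_posSemidef.mpr hB)).mp h

end

lemma Matrix.PosSemidef.sqrt_eq_cdiag {A : Matrix (Fin n) (Fin n) ℂ} (hA : A.PosSemidef) :
    hA.sqrt = cdiag hA.1 (fun i => Real.sqrt (hA.1.eigenvalues i)) := rfl

lemma Matrix.PosSemidef.posSemidef_sqrt {A : Matrix (Fin n) (Fin n) ℂ} (hA : A.PosSemidef) :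
    hA.sqrt.PosSemidef := by
  rw [hA.sqrt_eq_cdiag]
  exact cdiag_posSemidef hA.1 fun i => Real.sqrt_nonneg _

lemma Matrix.PosSemidef.sqrt_mul_self {A : Matrix (Fin n) (Fin n) ℂ} (hA : A.PosSemidef) :
    hA.sqrt * hA.sqrt = A := by
  rw [hA.sqrt_eq_cdiag, cdiag_mul]
  conv_rhs => rw [cdiag_spectral hA.1]
  congr 1
  funext i
  exact Real.mul_self_sqrt (hA.eigenvalues_nonneg i)

lemma Matrix.PosSemidef.eq_sqrt_of_sq_eq {A B : Matrix (Fin n) (Fin n) ℂ} (hA : A.PosSemidef)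
    (hB : B.PosSemidef) (h : A ^ 2 = B) : A = hB.sqrt :=
  psd_sq_unique hA hB.posSemidef_sqrt (by rw [h, pow_two, hB.sqrt_mul_self])

lemma traceNorm_dual (hM : M.IsHermitian) :
    ∃ W : Matrix (Fin n) (Fin n) ℂ, Wᴴ = W ∧ W * W = 1 ∧
      traceNorm M = ((W * M).trace).re ∧ 0 ≤ traceNorm M := by
  set d := hM.eigenvalues with hd
  set sgn : Fin n → ℝ := fun i => if d i < 0 then -1 else 1 with hsgn
  have hN : traceNorm M = ∑ i, |d i| := by
    have hpsd : (cdiag hM (fun i => |d i|)).PosSemidef :=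
      cdiag_posSemidef hM fun i => abs_nonneg _
    have hMM : M * M = cdiag hM (fun i => d i * d i) := by
      rw [← cdiag_mul, ← cdiag_spectral hM]
    have hsq : (cdiag hM (fun i => |d i|)) ^ 2 = Mᴴ * M := by
      rw [pow_two, cdiag_mul, hM.eq, hMM]
      have habs : (fun i => |d i| * |d i|) = fun i => d i * d i := by
        funext i
        rw [abs_mul_abs_self]
      rw [habs]
    have := hpsd.eq_sqrt_of_sq_eq (Matrix.posSemidef_conjTranspose_mul_self M) hsq
    rw [traceNorm, ← this, cdiag_trace]
    simp
  refine ⟨cdiag hM sgn, cdiag_herm hM sgn, ?_, ?_, ?_⟩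
  · rw [cdiag_mul]
    have h1 : (fun i => sgn i * sgn i) = fun _ => (1 : ℝ) := by
      funext i
      by_cases h : d i < 0 <;> simp [hsgn, h]
    rw [h1, cdiag_one hM]
  · have h5 : cdiag hM sgn * M = cdiag hM (fun i => sgn i * d i) := by
      rw [← cdiag_mul, ← cdiag_spectral hM]
    rw [hN, h5, cdiag_trace]
    simp only [Complex.ofReal_re]
    congr 1
    funext i
    by_cases h : d i < 0
    · simp [hsgn, h, abs_of_neg h]
    · simp [hsgn, h, abs_of_nonneg (not_lt.mp h)]
  · rw [hN]
    exact Finset.sum_nonneg fun i _ => abs_nonneg _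


/-- Poincaré inequality implies the transportation-cost bound
`‖ρ - σ‖₁² ≤ (4 / λ) E(σ^{-1/4} √ρ σ^{-1/4})`. -/
theorem traceNorm_sq_le_of_poincare {n : ℕ} (σ : Matrix (Fin n) (Fin n) ℂ)
    (hσ : σ.PosDef) (hσtr : σ.trace = 1)
    (E : Matrix (Fin n) (Fin n) ℂ → ℝ) (lam : ℝ) (hlam : 0 < lam)
    (hPoincare : ∀ X, lam * varSigma hσ X ≤ E X) :
    ∀ ρ : Matrix (Fin n) (Fin n) ℂ, ∀ (hρ : ρ.PosSemidef), ρ.trace = 1 →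
      traceNorm (ρ - σ) ^ 2 ≤
        (4 / lam) * E (mpow hσ.1 (-(1/4) : ℝ) * hρ.sqrt * mpow hσ.1 (-(1/4) : ℝ)) := by
  intro ρ hρ hρtr
  have hSmul : ∀ s t : ℝ, mpow hσ.1 s * mpow hσ.1 t = mpow hσ.1 (s + t) := mpow_mul_mpow hσ
  have hS0 : mpow hσ.1 0 = 1 := mpow_zero _
  have hS1 : mpow hσ.1 (1 : ℝ) = σ := mpow_one _
  set R := hρ.sqrt with hRdef
  set P := mpow hσ.1 (1/2 : ℝ) with hPdef
  set T := mpow hσ.1 (1/4 : ℝ) with hTdef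
  set Q := mpow hσ.1 (-(1/4) : ℝ) with hQdef
  set X := Q * R * Q with hXdef
  have hRh : Rᴴ = R := hρ.posSemidef_sqrt.1
  have hRR : R * R = ρ := hρ.sqrt_mul_self
  have hPh : Pᴴ = P := mpow_isHermitian hσ.1 _
  have hQh : Qᴴ = Q := mpow_isHermitian hσ.1 _
  have hPQ : P * Q = T := by
    rw [hPdef, hQdef, hSmul, show (1/2 + -(1/4) : ℝ) = 1/4 from by norm_num, hTdef]
  have hQP : Q * P = T := by
    rw [hPdef, hQdef, hSmul, show (-(1/4) + 1/2 : ℝ) = 1/4 from by norm_num, hTdef]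
  have hQT : Q * T = 1 := by
    rw [hTdef, hQdef, hSmul, show (-(1/4) + 1/4 : ℝ) = 0 from by norm_num, hS0]
  have hTQ : T * Q = 1 := by
    rw [hTdef, hQdef, hSmul, show (1/4 + -(1/4) : ℝ) = 0 from by norm_num, hS0]
  have hTT : T * T = P := by
    rw [hTdef, hPdef, hSmul, show (1/4 + 1/4 : ℝ) = 1/2 from by norm_num]
  have hPP : P * P = σ := by
    rw [hPdef, hSmul, show (1/2 + 1/2 : ℝ) = 1 from by norm_num, hS1]
  have hXh : Xᴴ = X := by
    rw [hXdef, Matrix.conjTranspose_mul, Matrix.conjTranspose_mul, hRh, hQh,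
      Matrix.mul_assoc]
  -- the mean
  set c := (σ * X).trace with hcdef
  have hPX : P * X = T * R * Q := by
    rw [hXdef, ← Matrix.mul_assoc, ← Matrix.mul_assoc, hPQ]
  have hc : c = (P * R).trace := by
    rw [hcdef, ← hPP, Matrix.mul_assoc, hPX, Matrix.trace_mul_comm, Matrix.mul_assoc, hQP,
      Matrix.trace_mul_comm, ← Matrix.mul_assoc, hTT]
  have hcstar : star c = c := by
    rw [hcdef, ← Matrix.trace_conjTranspose, Matrix.conjTranspose_mul, hXh, hσ.1.eq,
      Matrix.trace_mul_comm]
  obtain ⟨cr, hcr⟩ : ∃ r : ℝ, c = (r : ℂ) := by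
    refine ⟨c.re, ?_⟩
    rw [Complex.star_def] at hcstar
    exact (Complex.conj_eq_iff_re.mp hcstar).symm
  have h2 : P * X * P = T * R * T := by
    rw [hPX, Matrix.mul_assoc, hQP]
  have hT1 : (P * X * P * X).trace = 1 := by
    have cancelTQ : ∀ Z : Matrix (Fin n) (Fin n) ℂ, T * (Q * Z) = Z := fun Z => by
      rw [← Matrix.mul_assoc, hTQ, Matrix.one_mul]
    have h4 : P * X * P * X = T * (R * (R * Q)) := by
      rw [h2, hXdef]
      simp only [Matrix.mul_assoc]
      rw [cancelTQ]
    rw [h4, Matrix.trace_mul_comm, Matrix.mul_assoc, Matrix.mul_assoc, hQT, Matrix.mul_one,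
      hRR, hρtr]
  have hT2 : (P * X * P).trace = c := by
    rw [h2, Matrix.trace_mul_comm, ← Matrix.mul_assoc, hTT, ← hc]
  have hT3 : (P * (P * X)).trace = c := by
    rw [← Matrix.mul_assoc, hPP, ← hcdef]
  have hT4 : (P * P).trace = 1 := by rw [hPP, hσtr]
  have hVar : varSigma hσ X = 1 - cr ^ 2 := by
    unfold varSigma l2SigmaNormSq
    rw [← hcdef]
    have hsm : (c • (1 : Matrix (Fin n) (Fin n) ℂ))ᴴ = c • 1 := by
      rw [Matrix.conjTranspose_smul, Matrix.conjTranspose_one, hcstar]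
    rw [Matrix.conjTranspose_sub, hXh, hsm]
    simp only [Matrix.mul_sub, Matrix.sub_mul, Matrix.mul_smul, Matrix.smul_mul,
      Matrix.mul_one, smul_smul, Matrix.trace_sub, Matrix.trace_smul, Matrix.mul_assoc]
    have hT1' := hT1
    have hT2' := hT2
    have hT2b := hT2
    simp only [Matrix.mul_assoc] at hT1' hT2'
    rw [hT1', hT2', hT3, hT4, hcr]
    simp only [smul_eq_mul, mul_one]
    simp [Complex.sub_re, Complex.mul_re, Complex.ofReal_re, Complex.ofReal_im]
    ring
  -- part 2: trace norm bound
  set A := R - P with hAdef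
  set B := R + P with hBdef
  have hAh : Aᴴ = A := by rw [hAdef, Matrix.conjTranspose_sub, hRh, hPh]
  have hBh : Bᴴ = B := by rw [hBdef, Matrix.conjTranspose_add, hRh, hPh]
  have hPR : (P * R).trace = c := hc.symm
  have hRP : (R * P).trace = c := by rw [Matrix.trace_mul_comm, hPR]
  have haa : (Aᴴ * A).trace = 2 - 2 * c := by
    rw [hAh, hAdef, Matrix.sub_mul, Matrix.mul_sub, Matrix.mul_sub, Matrix.trace_sub,
      Matrix.trace_sub, Matrix.trace_sub, hRR, hPP, hρtr, hσtr, hRP, hPR]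
    ring
  have hbb : (Bᴴ * B).trace = 2 + 2 * c := by
    rw [hBh, hBdef, Matrix.add_mul, Matrix.mul_add, Matrix.mul_add, Matrix.trace_add,
      Matrix.trace_add, Matrix.trace_add, hRR, hPP, hρtr, hσtr, hRP, hPR]
    ring
  have hab : A * B + B * A = (ρ - σ) + (ρ - σ) := by
    rw [hAdef, hBdef, ← hRR, ← hPP]
    noncomm_ring
  obtain ⟨W, hWh, hWW, hTN, hTNnn⟩ := traceNorm_dual (hρ.1.sub hσ.1)
  set z := (W * (A * B)).trace with hzdef
  have hzstar : star z = (W * (B * A)).trace := by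
    rw [hzdef, ← Matrix.trace_conjTranspose, Matrix.conjTranspose_mul, Matrix.conjTranspose_mul,
      hAh, hBh, hWh, Matrix.trace_mul_comm]
  have htr2 : (W * (ρ - σ)).trace + (W * (ρ - σ)).trace = z + star z := by
    calc (W * (ρ - σ)).trace + (W * (ρ - σ)).trace
        = (W * ((ρ - σ) + (ρ - σ))).trace := by rw [Matrix.mul_add, Matrix.trace_add]
      _ = (W * (A * B + B * A)).trace := by rw [hab]
      _ = z + star z := by rw [Matrix.mul_add, Matrix.trace_add, ← hzdef, hzstar]
  have hre : traceNorm (ρ - σ) = z.re := by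
    have h6 := congrArg Complex.re htr2
    simp only [Complex.add_re, Complex.star_def, Complex.conj_re] at h6
    rw [hTN]
    linarith
  have hz2 : ‖z‖ ^ 2 ≤ (2 - 2 * cr) * (2 + 2 * cr) := by
    have hkey : z = ((A * W)ᴴ * B).trace := by
      rw [hzdef, Matrix.conjTranspose_mul, hAh, hWh, Matrix.mul_assoc]
    have hcs := trace_cs (A * W) B
    have hAW : ((A * W)ᴴ * (A * W)).trace = (Aᴴ * A).trace := by
      rw [Matrix.conjTranspose_mul, hAh, hWh, Matrix.trace_mul_comm, Matrix.mul_assoc,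
        ← Matrix.mul_assoc W W A, hWW, Matrix.one_mul]
    rw [hAW, ← hkey, haa, hbb, hcr] at hcs
    have hre1 : ((2 : ℂ) - 2 * (cr : ℂ)).re = 2 - 2 * cr := by simp
    have hre2 : ((2 : ℂ) + 2 * (cr : ℂ)).re = 2 + 2 * cr := by simp
    rw [hre1, hre2] at hcs
    exact hcs
  have hsq : traceNorm (ρ - σ) ^ 2 ≤ 4 * (1 - cr ^ 2) := by
    have h7 : z.re ^ 2 ≤ ‖z‖ ^ 2 := by
      have : ‖z‖ ^ 2 = z.re ^ 2 + z.im ^ 2 := by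
        rw [Complex.sq_norm, Complex.normSq_apply]
        ring
      nlinarith [sq_nonneg z.im]
    rw [hre]
    nlinarith
  have hpoin := hPoincare X
  rw [hVar] at hpoin
  calc traceNorm (ρ - σ) ^ 2 ≤ 4 * (1 - cr ^ 2) := hsq
    _ ≤ 4 * (E X / lam) := by
        have : 1 - cr ^ 2 ≤ E X / lam := (le_div_iff₀ hlam).mpr (by linarith)
        linarith
    _ = (4 / lam) * E X := by ring
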